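/- Let T > 0, let c, δc : [0,T] → ℝ be bounded measurable, and let g : [0,T] → ℝ be integrable. For ε ∈ ℝ define x_{4,ε}(t) := ∫₀ᵗ exp(∫ₛᵗ (c(u) + ε·δc(u)) du)·g(s) ds, and write x4 := x_{4,0}. Then for every t ∈ [0,T], the map ε ↦ x_{4,ε}(t) is differentiable at ε = 0 with derivative δx4(t) = ∫₀ᵗ Φ_c(t,s)·δc(s)·x4(s) ds, where Φ_c(t,s) := exp(∫ₛᵗ c(u) du). -/

import Mathlib

open MeasureTheory intervalIntegral

open Set
open scoped Interval

lemma msce_aux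
    (T : ℝ) (c δc g : ℝ → ℝ)
    (hcm : Measurable c) (Mc : ℝ) (hcb : ∀ t, |c t| ≤ Mc)
    (hδcm : Measurable δc) (Mδ : ℝ) (hδcb : ∀ t, |δc t| ≤ Mδ)
    (hgm : Measurable g) (hg : IntervalIntegrable g volume 0 T) :
    ∀ t ∈ Set.Icc (0 : ℝ) T,
      HasDerivAt
        (fun ε : ℝ => ∫ s in (0 : ℝ)..t,
          Real.exp (∫ u in s..t, (c u + ε * δc u)) * g s)
        (∫ s in (0 : ℝ)..t, Real.exp (∫ u in s..t, c u) * δc s *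
          (∫ r in (0 : ℝ)..s, Real.exp (∫ u in r..s, c u) * g r))
        0 := by
  intro t ht
  obtain ⟨ht0, htT⟩ := ht
  have hMc : 0 ≤ Mc := le_trans (abs_nonneg _) (hcb 0)
  have hMδ : 0 ≤ Mδ := le_trans (abs_nonneg _) (hδcb 0)
  have hT0 : 0 ≤ T := ht0.trans htT
  -- interval integrability of c, δc everywhere
  have hci : ∀ a b : ℝ, IntervalIntegrable c volume a b := fun a b => by
    rw [intervalIntegrable_iff]
    exact Measure.integrableOn_of_bounded measure_Ioc_lt_top.ne
      hcm.aestronglyMeasurable (ae_of_all _ fun x => by simpa using hcb x)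
  have hδci : ∀ a b : ℝ, IntervalIntegrable δc volume a b := fun a b => by
    rw [intervalIntegrable_iff]
    exact Measure.integrableOn_of_bounded measure_Ioc_lt_top.ne
      hδcm.aestronglyMeasurable (ae_of_all _ fun x => by simpa using hδcb x)
  set A : ℝ → ℝ := fun s => ∫ u in s..t, c u with hA
  set B : ℝ → ℝ := fun s => ∫ u in s..t, δc u with hB
  have hAeq : ∀ s, A s = (∫ u in (0:ℝ)..t, c u) - ∫ u in (0:ℝ)..s, c u := fun s =>
    (integral_interval_sub_left (hci 0 t) (hci 0 s)).symm
  have hBeq : ∀ s, B s = (∫ u in (0:ℝ)..t, δc u) - ∫ u in (0:ℝ)..s, δc u := fun s =>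
    (integral_interval_sub_left (hδci 0 t) (hδci 0 s)).symm
  have hAcont : Continuous A := by
    have : A = fun s => (∫ u in (0:ℝ)..t, c u) - ∫ u in (0:ℝ)..s, c u := funext hAeq
    rw [this]
    exact continuous_const.sub (intervalIntegral.continuous_primitive hci 0)
  have hBcont : Continuous B := by
    have : B = fun s => (∫ u in (0:ℝ)..t, δc u) - ∫ u in (0:ℝ)..s, δc u := funext hBeq
    rw [this]
    exact continuous_const.sub (intervalIntegral.continuous_primitive hδci 0)
  -- generic bound on interval integrals of c, δc
  have hIb : ∀ (f : ℝ → ℝ) (M : ℝ), (∀ x, |f x| ≤ M) → ∀ a b : ℝ,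
      a ∈ Icc (0:ℝ) t → b ∈ Icc (0:ℝ) t → |∫ u in a..b, f u| ≤ M * T := by
    intro f M hMf a b ha hb
    have h1 : ‖∫ u in a..b, f u‖ ≤ M * |b - a| :=
      intervalIntegral.norm_integral_le_of_norm_le_const fun x _ => by
        rw [Real.norm_eq_abs]; exact hMf x
    rw [Real.norm_eq_abs] at h1
    refine h1.trans (mul_le_mul_of_nonneg_left ?_ (le_trans (abs_nonneg _) (hMf 0)))
    rw [abs_sub_le_iff]
    constructor <;> nlinarith [ha.1, ha.2, hb.1, hb.2, ht0, htT]
  have hAb : ∀ s ∈ Icc (0:ℝ) t, |A s| ≤ Mc * T := fun s hs =>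
    hIb c Mc hcb s t hs ⟨ht0, le_rfl⟩
  have hBb : ∀ s ∈ Icc (0:ℝ) t, |B s| ≤ Mδ * T := fun s hs =>
    hIb δc Mδ hδcb s t hs ⟨ht0, le_rfl⟩
  have hAB : ∀ (x s : ℝ), (∫ u in s..t, (c u + x * δc u)) = A s + x * B s := by
    intro x s
    rw [intervalIntegral.integral_add (hci s t) ((hδci s t).const_mul x),
      intervalIntegral.integral_const_mul]
  have hgt : IntervalIntegrable g volume 0 t :=
    hg.mono_set (by
      rw [uIcc_of_le ht0, uIcc_of_le (ht0.trans htT)]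
      exact Icc_subset_Icc le_rfl htT)
  -- the exponential bound constant
  set C : ℝ := Real.exp (Mc * T + Mδ * T) with hC
  have hsmemIcc : ∀ s ∈ Ι (0:ℝ) t, s ∈ Icc (0:ℝ) t := by
    intro s hs
    rw [uIoc_of_le ht0] at hs
    exact ⟨hs.1.le, hs.2⟩
  -- Step 1 : differentiation under the integral sign
  have key := intervalIntegral.hasDerivAt_integral_of_dominated_loc_of_deriv_le
    (F := fun (x : ℝ) s => Real.exp (∫ u in s..t, (c u + x * δc u)) * g s)
    (F' := fun (x : ℝ) s => B s * Real.exp (A s + x * B s) * g s)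
    (x₀ := (0:ℝ)) (a := (0:ℝ)) (b := t) (μ := volume)
    (bound := fun s => (Mδ * T) * C * |g s|) (s := Metric.ball (0:ℝ) 1) (Metric.ball_mem_nhds _ one_pos)
    ?_ ?_ ?_ ?_ ?_ ?_
  · -- identify the derivative value and conclude
    have hval : (∫ s in (0:ℝ)..t, B s * Real.exp (A s + 0 * B s) * g s)
        = ∫ s in (0:ℝ)..t, Real.exp (∫ u in s..t, c u) * δc s *
            (∫ r in (0:ℝ)..s, Real.exp (∫ u in r..s, c u) * g r) := by
      simp only [zero_mul, add_zero]
      rw [intervalIntegral.integral_of_le ht0, intervalIntegral.integral_of_le ht0]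
      set μt := volume.restrict (Ioc (0:ℝ) t) with hμt
      haveI : IsFiniteMeasure μt := by
        constructor
        rw [hμt, Measure.restrict_apply_univ]
        exact measure_Ioc_lt_top
      set Φ : ℝ → ℝ → ℝ := fun s u =>
        ({q : ℝ × ℝ | q.1 < q.2}.indicator (fun q => δc q.2) (s, u)) *
          (Real.exp (A s) * g s) with hΦ
      have hΦmeas : Measurable (Function.uncurry Φ) := by
        have : Function.uncurry Φ = fun p : ℝ × ℝ =>
            ({q : ℝ × ℝ | q.1 < q.2}.indicator (fun q => δc q.2) p) *
              (Real.exp (A p.1) * g p.1) := rfl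
        rw [this]
        exact ((hδcm.comp measurable_snd).indicator
            (measurableSet_lt measurable_fst measurable_snd)).mul
          ((Real.measurable_exp.comp (hAcont.measurable.comp measurable_fst)).mul
            (hgm.comp measurable_fst))
      have hgI : Integrable (fun s => |g s|) μt := by
        have h := intervalIntegrable_iff.1 hgt.norm
        rwa [uIoc_of_le ht0] at h
      have hΦint : Integrable (Function.uncurry Φ) (μt.prod μt) := by
        refine Integrable.mono'
          (g := fun p : ℝ × ℝ => (Mδ * (Real.exp (Mc * T) * |g p.1|)) * (1 : ℝ)) ?_
          hΦmeas.aestronglyMeasurable ?_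
        · exact Integrable.mul_prod ((hgI.const_mul _).const_mul Mδ) (integrable_const 1)
        · have hmem : ∀ᵐ p : ℝ × ℝ ∂(μt.prod μt), p ∈ Ioc (0:ℝ) t ×ˢ Ioc (0:ℝ) t := by
            rw [hμt, Measure.prod_restrict]
            exact ae_restrict_mem (measurableSet_Ioc.prod measurableSet_Ioc)
          filter_upwards [hmem] with p hp
          have hp1 : p.1 ∈ Icc (0:ℝ) t := ⟨hp.1.1.le, hp.1.2⟩
          have hind : |{q : ℝ × ℝ | q.1 < q.2}.indicator (fun q => δc q.2) p| ≤ Mδ := by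
            by_cases h : p ∈ {q : ℝ × ℝ | q.1 < q.2}
            · rw [indicator_of_mem h]; exact hδcb _
            · rw [indicator_of_notMem h]; simpa using hMδ
          have hexp : Real.exp (A p.1) ≤ Real.exp (Mc * T) :=
            Real.exp_le_exp.2 ((le_abs_self _).trans (hAb _ hp1))
          have : ‖Function.uncurry Φ p‖ = |{q : ℝ × ℝ | q.1 < q.2}.indicator
              (fun q => δc q.2) p| * (Real.exp (A p.1) * |g p.1|) := by
            rw [Real.norm_eq_abs]
            show |_ * (Real.exp (A p.1) * g p.1)| = _
            rw [abs_mul, abs_mul, abs_of_pos (Real.exp_pos _)]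
          rw [this, mul_one]
          have h2 : Real.exp (A p.1) * |g p.1| ≤ Real.exp (Mc * T) * |g p.1| :=
            mul_le_mul_of_nonneg_right hexp (abs_nonneg _)
          exact mul_le_mul hind h2 (mul_nonneg (Real.exp_pos _).le (abs_nonneg _)) hMδ
      have hL : ∀ s ∈ Ioc (0:ℝ) t, B s * Real.exp (A s) * g s = ∫ u, Φ s u ∂μt := by
        intro s hs
        have e1 : ∀ u, Φ s u = (Ioi s).indicator δc u * (Real.exp (A s) * g s) := by
          intro u
          by_cases h : s < u <;>
            simp [hΦ, Set.indicator_apply, h]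
        calc B s * Real.exp (A s) * g s
            = (∫ u, (Ioi s).indicator δc u ∂μt) * (Real.exp (A s) * g s) := by
              rw [MeasureTheory.integral_indicator measurableSet_Ioi, hμt,
                Measure.restrict_restrict measurableSet_Ioi]
              have hset : Ioi s ∩ Ioc (0:ℝ) t = Ioc s t := by
                ext u
                constructor
                · rintro ⟨h1, _, h3⟩; exact ⟨h1, h3⟩
                · rintro ⟨h1, h2⟩; exact ⟨h1, hs.1.trans h1, h2⟩
              rw [hset, ← intervalIntegral.integral_of_le hs.2]
              show B s * Real.exp (A s) * g s = B s * (Real.exp (A s) * g s)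
              ring
          _ = ∫ u, (Ioi s).indicator δc u * (Real.exp (A s) * g s) ∂μt :=
              (MeasureTheory.integral_mul_const _ _).symm
          _ = ∫ u, Φ s u ∂μt := by
              exact integral_congr_ae (ae_of_all _ fun u => (e1 u).symm)
      have hR : ∀ u ∈ Ioc (0:ℝ) t, (∫ s, Φ s u ∂μt)
          = Real.exp (∫ v in u..t, c v) * δc u *
            (∫ r in (0:ℝ)..u, Real.exp (∫ v in r..u, c v) * g r) := by
        intro u hu
        have e2 : ∀ s, Φ s u =
            (Iio u).indicator (fun s => δc u * (Real.exp (A s) * g s)) s := by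
          intro s
          by_cases h : s < u <;>
            simp [hΦ, Set.indicator_apply, h]
        have hset : Iio u ∩ Ioc (0:ℝ) t = Ioo (0:ℝ) u := by
          ext s
          constructor
          · rintro ⟨h1, h2, _⟩; exact ⟨h2, h1⟩
          · rintro ⟨h1, h2⟩; exact ⟨h2, h1, (h2.le.trans hu.2)⟩
        calc (∫ s, Φ s u ∂μt)
            = ∫ s, (Iio u).indicator (fun s => δc u * (Real.exp (A s) * g s)) s ∂μt := by
              exact integral_congr_ae (ae_of_all _ fun s => e2 s)
          _ = ∫ s in Ioo (0:ℝ) u, δc u * (Real.exp (A s) * g s) := by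
              rw [MeasureTheory.integral_indicator measurableSet_Iio, hμt,
                Measure.restrict_restrict measurableSet_Iio, hset]
          _ = δc u * ∫ s in Ioo (0:ℝ) u, Real.exp (A s) * g s := by
              rw [MeasureTheory.integral_const_mul]
          _ = δc u * ∫ s in (0:ℝ)..u, Real.exp (A s) * g s := by
              rw [intervalIntegral.integral_of_le hu.1.le, integral_Ioc_eq_integral_Ioo]
          _ = δc u * (Real.exp (∫ v in u..t, c v) *
                ∫ s in (0:ℝ)..u, Real.exp (∫ v in s..u, c v) * g s) := by
              congr 1
              rw [← intervalIntegral.integral_const_mul]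
              refine intervalIntegral.integral_congr fun s hs => ?_
              have hadd := intervalIntegral.integral_add_adjacent_intervals
                (hci s u) (hci u t)
              show Real.exp (A s) * g s = _
              have hAs : A s = (∫ v in s..u, c v) + ∫ v in u..t, c v := by
                rw [hadd]
              rw [hAs, Real.exp_add]
              ring
          _ = Real.exp (∫ v in u..t, c v) * δc u *
                (∫ r in (0:ℝ)..u, Real.exp (∫ v in r..u, c v) * g r) := by ring
      calc (∫ s in Ioc (0:ℝ) t, B s * Real.exp (A s) * g s)
          = ∫ s, (∫ u, Φ s u ∂μt) ∂μt := setIntegral_congr_fun measurableSet_Ioc hL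
        _ = ∫ u, (∫ s, Φ s u ∂μt) ∂μt := integral_integral_swap hΦint
        _ = ∫ s in Ioc (0:ℝ) t, Real.exp (∫ u in s..t, c u) * δc s *
              (∫ r in (0:ℝ)..s, Real.exp (∫ u in r..s, c u) * g r) :=
            setIntegral_congr_fun measurableSet_Ioc hR
    exact hval ▸ key.2
  · -- hF_meas
    refine Filter.Eventually.of_forall fun x => ?_
    simp only [hAB]
    exact ((Real.measurable_exp.comp ((hAcont.measurable).add
      ((measurable_const).mul hBcont.measurable))).mul hgm).aestronglyMeasurable
  · -- hF_int
    simp only [hAB, zero_mul, add_zero]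
    rw [intervalIntegrable_iff]
    refine Integrable.mono' (g := fun s => Real.exp (Mc * T) * |g s|) ?_ ?_ ?_
    · exact intervalIntegrable_iff.1 (hgt.norm.const_mul _)
    · exact ((Real.measurable_exp.comp hAcont.measurable).mul hgm).aestronglyMeasurable.restrict
    · refine (ae_restrict_iff' measurableSet_uIoc).2 (ae_of_all _ fun s hs => ?_)
      have h1 : A s ≤ Mc * T := (le_abs_self _).trans (hAb s (hsmemIcc s hs))
      rw [Real.norm_eq_abs, abs_mul, abs_of_pos (Real.exp_pos _)]
      exact mul_le_mul_of_nonneg_right (Real.exp_le_exp.2 h1) (abs_nonneg _)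
  · -- hF'_meas
    exact (((hBcont.measurable).mul (Real.measurable_exp.comp
      ((hAcont.measurable).add ((measurable_const).mul hBcont.measurable)))).mul
      hgm).aestronglyMeasurable.restrict
  · -- h_bound
    refine ae_of_all _ fun s hs x hx => ?_
    have hsI := hsmemIcc s hs
    have hBs : |B s| ≤ Mδ * T := hBb s hsI
    have hAs : A s ≤ Mc * T := (le_abs_self _).trans (hAb s hsI)
    have hxB : x * B s ≤ Mδ * T := by
      calc x * B s ≤ |x * B s| := le_abs_self _
        _ = |x| * |B s| := abs_mul _ _
        _ ≤ 1 * (Mδ * T) := by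
            have hx1 : |x| ≤ 1 := by
              have := mem_ball_zero_iff.1 hx
              rw [Real.norm_eq_abs] at this
              exact this.le
            exact mul_le_mul hx1 hBs (abs_nonneg _) zero_le_one
        _ = Mδ * T := one_mul _
    have hexp : Real.exp (A s + x * B s) ≤ C :=
      Real.exp_le_exp.2 (add_le_add hAs hxB)
    rw [Real.norm_eq_abs, abs_mul, abs_mul, abs_of_pos (Real.exp_pos _)]
    refine mul_le_mul (mul_le_mul hBs hexp (Real.exp_pos _).le
      (mul_nonneg hMδ hT0)) le_rfl (abs_nonneg _)
      (mul_nonneg (mul_nonneg hMδ hT0) (Real.exp_pos _).le)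
  · -- bound integrable
    exact (hgt.norm.const_mul _)
  · -- h_diff
    refine ae_of_all _ fun s hs x hx => ?_
    simp only [hAB]
    have h1 : HasDerivAt (fun y : ℝ => A s + y * B s) (B s) x := by
      simpa using ((hasDerivAt_id x).mul_const (B s)).const_add (A s)
    have h2 := (h1.exp).mul_const (g s)
    convert h2 using 1
    · rfl
    ring


/-- First variation of `x4` under a perturbation of the coefficient `c`:
with `x_{4,ε}(t) = ∫_0^t exp(∫_s^t (c + ε δc)) g(s) ds`, the map
`ε ↦ x_{4,ε}(t)` is differentiable at `ε = 0` with derivative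
`δx4(t) = ∫_0^t Φ_c(t,s) δc(s) x4(s) ds`. -/
theorem msce_c_first_variation
    (T : ℝ) (hT : 0 < T) (c δc g : ℝ → ℝ)
    (hcm : Measurable c) (hcb : ∃ M, ∀ t ∈ Set.Icc (0 : ℝ) T, |c t| ≤ M)
    (hδcm : Measurable δc) (hδcb : ∃ M, ∀ t ∈ Set.Icc (0 : ℝ) T, |δc t| ≤ M)
    (hg : IntervalIntegrable g volume 0 T) :
    ∀ t ∈ Set.Icc (0 : ℝ) T,
      HasDerivAt
        (fun ε : ℝ => ∫ s in (0 : ℝ)..t,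
          Real.exp (∫ u in s..t, (c u + ε * δc u)) * g s)
        (∫ s in (0 : ℝ)..t, Real.exp (∫ u in s..t, c u) * δc s *
          (∫ r in (0 : ℝ)..s, Real.exp (∫ u in r..s, c u) * g r))
        0 := by
  intro t ht
  obtain ⟨ht0, htT⟩ := ht
  obtain ⟨Mc, hMc⟩ := hcb
  obtain ⟨Mδ, hMδ⟩ := hδcb
  have htmem : t ∈ Icc (0:ℝ) T := ⟨ht0, htT⟩
  have hc'm : Measurable ((Icc (0:ℝ) T).indicator c) := hcm.indicator measurableSet_Icc
  have hδc'm : Measurable ((Icc (0:ℝ) T).indicator δc) := hδcm.indicator measurableSet_Icc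
  have hc'b : ∀ u, |(Icc (0:ℝ) T).indicator c u| ≤ max Mc 0 := by
    intro u
    by_cases h : u ∈ Icc (0:ℝ) T
    · rw [indicator_of_mem h]; exact (hMc u h).trans (le_max_left _ _)
    · rw [indicator_of_notMem h]; simp
  have hδc'b : ∀ u, |(Icc (0:ℝ) T).indicator δc u| ≤ max Mδ 0 := by
    intro u
    by_cases h : u ∈ Icc (0:ℝ) T
    · rw [indicator_of_mem h]; exact (hMδ u h).trans (le_max_left _ _)
    · rw [indicator_of_notMem h]; simp
  -- measurable representative of `g`
  have hgae : AEStronglyMeasurable g (volume.restrict (Ioc (0:ℝ) T)) :=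
    hg.1.aestronglyMeasurable
  have hg'm : Measurable (hgae.mk g) := hgae.stronglyMeasurable_mk.measurable
  have hgg'T : g =ᵐ[volume.restrict (Ioc (0:ℝ) T)] hgae.mk g := hgae.ae_eq_mk
  have hg'int : IntervalIntegrable (hgae.mk g) volume 0 T := by
    rw [intervalIntegrable_iff, uIoc_of_le hT.le] at hg ⊢
    exact hg.congr hgg'T
  -- congruence of inner integrals
  have hceq : ∀ a b : ℝ, a ∈ Icc (0:ℝ) T → b ∈ Icc (0:ℝ) T →
      (∫ u in a..b, c u) = ∫ u in a..b, (Icc (0:ℝ) T).indicator c u := fun a b ha hb =>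
    intervalIntegral.integral_congr fun u hu =>
      (indicator_of_mem (uIcc_subset_Icc ha hb hu) c).symm
  have hcδeq : ∀ (x : ℝ) (a b : ℝ), a ∈ Icc (0:ℝ) T → b ∈ Icc (0:ℝ) T →
      (∫ u in a..b, (c u + x * δc u))
        = ∫ u in a..b, ((Icc (0:ℝ) T).indicator c u
            + x * (Icc (0:ℝ) T).indicator δc u) := fun x a b ha hb =>
    intervalIntegral.integral_congr fun u hu => by
      rw [indicator_of_mem (uIcc_subset_Icc ha hb hu) c,
        indicator_of_mem (uIcc_subset_Icc ha hb hu) δc]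
  have main := msce_aux T ((Icc (0:ℝ) T).indicator c) ((Icc (0:ℝ) T).indicator δc)
    (hgae.mk g) hc'm (max Mc 0) hc'b hδc'm (max Mδ 0) hδc'b hg'm hg'int t htmem
  -- transfer the function
  have hfun : (fun ε : ℝ => ∫ s in (0 : ℝ)..t,
        Real.exp (∫ u in s..t, (c u + ε * δc u)) * g s)
      = fun ε : ℝ => ∫ s in (0 : ℝ)..t,
        Real.exp (∫ u in s..t, ((Icc (0:ℝ) T).indicator c u
          + ε * (Icc (0:ℝ) T).indicator δc u)) * hgae.mk g s := by
    funext ε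
    have hgg't : ∀ᵐ x ∂(volume : Measure ℝ), x ∈ Ι (0:ℝ) t → g x = hgae.mk g x := by
      refine (ae_restrict_iff' measurableSet_uIoc).1 ?_
      refine ae_restrict_of_ae_restrict_of_subset ?_ hgg'T
      rw [uIoc_of_le ht0]
      exact Ioc_subset_Ioc le_rfl htT
    refine intervalIntegral.integral_congr_ae ?_
    filter_upwards [hgg't] with s hgs hs
    have hsmem : s ∈ Icc (0:ℝ) T := by
      rw [uIoc_of_le ht0] at hs
      exact ⟨hs.1.le, hs.2.trans htT⟩
    rw [hgs hs, hcδeq ε s t hsmem htmem]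
  -- transfer the value
  have hval : (∫ s in (0 : ℝ)..t, Real.exp (∫ u in s..t, c u) * δc s *
        (∫ r in (0 : ℝ)..s, Real.exp (∫ u in r..s, c u) * g r))
      = ∫ s in (0 : ℝ)..t,
          Real.exp (∫ u in s..t, (Icc (0:ℝ) T).indicator c u)
            * (Icc (0:ℝ) T).indicator δc s *
          (∫ r in (0 : ℝ)..s,
            Real.exp (∫ u in r..s, (Icc (0:ℝ) T).indicator c u) * hgae.mk g r) := by
    refine intervalIntegral.integral_congr fun s hs => ?_
    have hsmem : s ∈ Icc (0:ℝ) T := by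
      rw [uIcc_of_le ht0] at hs
      exact ⟨hs.1, hs.2.trans htT⟩
    have hinner : (∫ r in (0 : ℝ)..s, Real.exp (∫ u in r..s, c u) * g r)
        = ∫ r in (0 : ℝ)..s,
            Real.exp (∫ u in r..s, (Icc (0:ℝ) T).indicator c u) * hgae.mk g r := by
      have hgg's : ∀ᵐ x ∂(volume : Measure ℝ), x ∈ Ι (0:ℝ) s → g x = hgae.mk g x := by
        refine (ae_restrict_iff' measurableSet_uIoc).1 ?_
        refine ae_restrict_of_ae_restrict_of_subset ?_ hgg'T
        rw [uIoc_of_le hsmem.1]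
        exact Ioc_subset_Ioc le_rfl hsmem.2
      refine intervalIntegral.integral_congr_ae ?_
      filter_upwards [hgg's] with r hgr hr
      have hrmem : r ∈ Icc (0:ℝ) T := by
        rw [uIoc_of_le hsmem.1] at hr
        exact ⟨hr.1.le, hr.2.trans hsmem.2⟩
      rw [hgr hr, hceq r s hrmem hsmem]
    rw [hinner, hceq s t hsmem htmem, indicator_of_mem hsmem δc]
  rw [hfun, hval]
  exact main
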